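/- Let τ ∈ ℂ and let f, g : ℂ → ℂ be meromorphic at τ (MeromorphicAt), with the order of f at τ negative (f has a pole at τ) and the order of g at τ nonnegative. Then there exists L ∈ ℂ such that, along the punctured neighborhood filter 𝓝[≠]τ: g(t) → L, ‖f(t)‖ → +∞, and Metric.infDist((f(t), g(t)), {(x, y) ∈ ℂ × ℂ : y = L}) → 0. -/

import Mathlib

open Filter Topology

private lemma gLimit {τ : ℂ} {g : ℂ → ℂ} (hg : MeromorphicAt g τ) (hgord : 0 ≤ meromorphicOrderAt g τ) :
    ∃ L : ℂ, Tendsto g (𝓝[≠] τ) (𝓝 L) := by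
  rcases eq_or_ne (meromorphicOrderAt g τ) ⊤ with htop | htop
  · refine ⟨0, ?_⟩
    have h0 := meromorphicOrderAt_eq_top_iff.mp htop
    exact Tendsto.congr' (h0.mono fun z hz => hz.symm) tendsto_const_nhds
  · obtain ⟨n, hn⟩ := WithTop.ne_top_iff_exists.mp htop
    have hn0 : (0 : ℤ) ≤ n := by
      have := hgord; rw [← hn] at this; exact_mod_cast this
    obtain ⟨h, hh, hh0, heq⟩ := (meromorphicOrderAt_eq_int_iff hg (n := n)).mp hn.symm
    refine ⟨(τ - τ) ^ n.toNat * h τ, ?_⟩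
    have hcont : Tendsto (fun z => (z - τ) ^ n.toNat * h z) (𝓝 τ)
        (𝓝 ((τ - τ) ^ n.toNat * h τ)) := by
      exact ((continuous_id.sub continuous_const).pow n.toNat).continuousAt.tendsto.mul
        hh.continuousAt.tendsto
    refine Tendsto.congr' ?_ (hcont.mono_left nhdsWithin_le_nhds)
    filter_upwards [heq] with z hz
    rw [hz, smul_eq_mul, ← zpow_natCast, Int.toNat_of_nonneg hn0]

private lemma fBlowup {τ : ℂ} {f : ℂ → ℂ} (hf : MeromorphicAt f τ) (hford : meromorphicOrderAt f τ < 0) :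
    Tendsto (fun t => ‖f t‖) (𝓝[≠] τ) atTop := by
  have htop : meromorphicOrderAt f τ ≠ ⊤ := hford.ne_top
  obtain ⟨m, hm⟩ := WithTop.ne_top_iff_exists.mp htop
  have hm0 : m < 0 := by
    have := hford; rw [← hm] at this; exact_mod_cast this
  obtain ⟨h, hh, hh0, heq⟩ := (meromorphicOrderAt_eq_int_iff hf (n := m)).mp hm.symm
  set k : ℕ := (-m).toNat with hk
  have hk1 : 1 ≤ k := by omega
  -- ‖f z‖ = ‖h z‖ * (‖z - τ‖ ^ k)⁻¹ eventually
  have hnorm : ∀ᶠ z in 𝓝[≠] τ, ‖f z‖ = ‖h z‖ * (‖z - τ‖ ^ k)⁻¹ := by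
    filter_upwards [heq, self_mem_nhdsWithin] with z hz hz'
    have hzτ : z - τ ≠ 0 := sub_ne_zero.mpr hz'
    rw [hz, smul_eq_mul, norm_mul, norm_zpow]
    have : (m : ℤ) = -(k : ℤ) := by omega
    rw [this, zpow_neg, zpow_natCast, mul_comm]
  have h1 : Tendsto (fun z => ‖h z‖) (𝓝[≠] τ) (𝓝 ‖h τ‖) :=
    (hh.continuousAt.norm.tendsto).mono_left nhdsWithin_le_nhds
  have h2 : Tendsto (fun z => (‖z - τ‖ ^ k)⁻¹) (𝓝[≠] τ) atTop := by
    apply tendsto_inv_nhdsGT_zero.comp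
    rw [tendsto_nhdsWithin_iff]
    constructor
    · have : Tendsto (fun z : ℂ => ‖z - τ‖ ^ k) (𝓝 τ) (𝓝 (‖τ - τ‖ ^ k)) :=
        (((continuous_id.sub continuous_const).norm.pow k).continuousAt).tendsto
      rw [show ‖τ - τ‖ = 0 by simp, zero_pow (by omega : k ≠ 0)] at this
      exact this.mono_left nhdsWithin_le_nhds
    · filter_upwards [self_mem_nhdsWithin] with z hz
      have : z - τ ≠ 0 := sub_ne_zero.mpr hz
      exact Set.mem_Ioi.mpr (pow_pos (norm_pos_iff.mpr this) k)
  have hpos : 0 < ‖h τ‖ := norm_pos_iff.mpr hh0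
  exact Tendsto.congr' (hnorm.mono fun z hz => hz.symm) (Tendsto.pos_mul_atTop hpos h1 h2)

/-- A pole `τ` of `f` that is not a pole of `g` (both meromorphic at `τ`) yields a
horizontal line `y = L` as a g-asymptote of the curve parametrized by `(f, g)`. -/
theorem horizontal_asymptote_of_meromorphic_parametrization
    (τ : ℂ) (f g : ℂ → ℂ)
    (hf : MeromorphicAt f τ) (hg : MeromorphicAt g τ)
    (hford : meromorphicOrderAt f τ < 0) (hgord : 0 ≤ meromorphicOrderAt g τ) :
    ∃ L : ℂ,
      Tendsto g (𝓝[≠] τ) (𝓝 L)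
      ∧ Tendsto (fun t => ‖f t‖) (𝓝[≠] τ) atTop
      ∧ Tendsto (fun t => Metric.infDist ((f t, g t) : ℂ × ℂ)
            {p : ℂ × ℂ | p.2 = L}) (𝓝[≠] τ) (𝓝 0) := by
  obtain ⟨L, hL⟩ := gLimit hg hgord
  refine ⟨L, hL, fBlowup hf hford, ?_⟩
  have hdist : Tendsto (fun t => dist (g t) L) (𝓝[≠] τ) (𝓝 0) :=
    tendsto_iff_dist_tendsto_zero.mp hL
  have hle : ∀ t, Metric.infDist ((f t, g t) : ℂ × ℂ) {p : ℂ × ℂ | p.2 = L}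
      ≤ dist (g t) L := fun t => by
    calc Metric.infDist ((f t, g t) : ℂ × ℂ) {p : ℂ × ℂ | p.2 = L}
        ≤ dist ((f t, g t) : ℂ × ℂ) (f t, L) :=
          Metric.infDist_le_dist_of_mem (by simp [Set.mem_setOf_eq])
      _ = dist (g t) L := by simp [Prod.dist_eq, dist_nonneg]
  exact squeeze_zero (fun t => Metric.infDist_nonneg) hle hdist
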